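/- Let m, n ≥ 1, A ∈ ℝ^{m×n} with max_{i,j}|A_{ij}| ≤ 1, ν ∈ (0, 1/max{m,n}), and α, c > 0. Let (x', y') ∈ Δ^n_ν × Δ^m_ν, and suppose (x*, y*) ∈ Δ^n_ν × Δ^m_ν is the exact saddle point of min_{x ∈ Δ^n_ν} max_{y ∈ Δ^m_ν} yᵀAx + α·KL(x‖x') − α·KL(y‖y'), i.e. x* minimizes x ↦ (y*)ᵀAx + α·KL(x‖x') over Δ^n_ν and y* maximizes y ↦ yᵀAx* − α·KL(y‖y') over Δ^m_ν. Suppose KL(x*‖x') + KL(y*‖y') ≤ c·α². Let x̃ minimize x ↦ (y')ᵀAx + α·KL(x‖x') over Δ^n_ν and let ỹ maximize y ↦ yᵀAx' − α·KL(y‖y') over Δ^m_ν. Then for every j ∈ [n], exp(−2√(2c))·x̃_j ≤ x*_j ≤ exp(2√(2c))·x̃_j, and for every i ∈ [m], exp(−2√(2c))·ỹ_i ≤ y*_i ≤ exp(2√(2c))·ỹ_i. -/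

import Mathlib

open Matrix Finset

set_option maxHeartbeats 1000000

/-- KL divergence `KL(a‖b) := Σᵢ aᵢ log(aᵢ/bᵢ)`. -/
noncomputable def KLdiv {k : ℕ} (a b : Fin k → ℝ) : ℝ := ∑ i, a i * Real.log (a i / b i)

noncomputable def auxh (t : ℝ) : ℝ := Real.log t - (t-1)*(5*t+1)/(2*t*(t+2))

lemma auxh_deriv (t : ℝ) (ht : 0 < t) :
    HasDerivAt auxh ((t-1)^3/(t^2*(t+2)^2)) t := by
  have hden : 2*t*(t+2) ≠ 0 := by positivity
  have h1 : HasDerivAt Real.log t⁻¹ t := Real.hasDerivAt_log (ne_of_gt ht)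
  have h2 : HasDerivAt (fun t : ℝ => (t-1)*(5*t+1)) (1*(5*t+1) + (t-1)*5) t := by
    have := (((hasDerivAt_id t).sub_const 1)).mul
      ((((hasDerivAt_id t).const_mul 5)).add_const 1)
    simpa [Pi.mul_def] using this
  have h3 : HasDerivAt (fun t : ℝ => 2*t*(t+2)) (2*(t+2) + 2*t*1) t := by
    have := (((hasDerivAt_id t).const_mul 2)).mul ((hasDerivAt_id t).add_const 2)
    simpa [Pi.mul_def] using this
  have h4 := h2.div h3 hden
  have h5 := h1.sub h4
  refine h5.congr_deriv ?_
  field_simp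
  ring

lemma log_ge (t : ℝ) (ht : 0 < t) : (t-1)*(5*t+1)/(2*t*(t+2)) ≤ Real.log t := by
  have key : 0 ≤ auxh t := by
    have h1 : auxh 1 = 0 := by norm_num [auxh]
    rcases le_or_gt 1 t with h | h
    · have mono : MonotoneOn auxh (Set.Ici (1:ℝ)) := by
        apply monotoneOn_of_deriv_nonneg (convex_Ici 1)
        · intro x hx
          exact (auxh_deriv x (by simp at hx; linarith)).continuousAt.continuousWithinAt
        · intro x hx
          rw [interior_Ici] at hx
          exact (auxh_deriv x (by simp at hx; linarith)).differentiableAt.differentiableWithinAt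
        · intro x hx
          rw [interior_Ici] at hx
          simp only [Set.mem_Ioi] at hx
          rw [(auxh_deriv x (by linarith)).deriv]
          have h1 : (0:ℝ) ≤ (x-1)^3 := by nlinarith [sq_nonneg (x-1)]
          have h2 : (0:ℝ) < x^2*(x+2)^2 := by positivity
          exact div_nonneg h1 h2.le
      have := mono (by norm_num) (Set.mem_Ici.2 h) h
      linarith
    · have anti : AntitoneOn auxh (Set.Ioc (0:ℝ) 1) := by
        apply antitoneOn_of_deriv_nonpos (convex_Ioc 0 1)
        · intro x hx
          exact (auxh_deriv x hx.1).continuousAt.continuousWithinAt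
        · intro x hx
          rw [interior_Ioc] at hx
          exact (auxh_deriv x hx.1).differentiableAt.differentiableWithinAt
        · intro x hx
          rw [interior_Ioc] at hx
          rw [(auxh_deriv x hx.1).deriv]
          have h1 : (x-1)^3 ≤ 0 := by nlinarith [hx.2, sq_nonneg (x-1)]
          have h2 : 0 < x^2*(x+2)^2 := by nlinarith [hx.1]
          exact div_nonpos_of_nonpos_of_nonneg h1 h2.le
      have := anti (Set.mem_Ioc.2 ⟨ht, h.le⟩) (by norm_num) h.le
      linarith
  unfold auxh at key
  linarith

lemma pt_pinsker (p q : ℝ) (hp : 0 < p) (hq : 0 < q) :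
    3*(p-q)^2/(2*p+4*q) ≤ p * Real.log (p/q) - p + q := by
  have ht : 0 < p/q := by positivity
  have h := log_ge (p/q) ht
  have key : p * ((p/q-1)*(5*(p/q)+1)/(2*(p/q)*((p/q)+2))) - p + q = 3*(p-q)^2/(2*p+4*q) := by
    have h1 : (2:ℝ)*p + 4*q ≠ 0 := by positivity
    field_simp
    ring
  nlinarith [mul_le_mul_of_nonneg_left h hp.le]

lemma KL_lb {k : ℕ} (p q : Fin k → ℝ) (hp : ∀ i, 0 < p i) (hq : ∀ i, 0 < q i)
    (hps : ∑ i, p i = 1) (hqs : ∑ i, q i = 1) :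
    ∑ i, 3*(p i - q i)^2/(2*p i + 4*q i) ≤ KLdiv p q := by
  have : KLdiv p q = ∑ i, (p i * Real.log (p i / q i) - p i + q i) := by
    unfold KLdiv
    rw [Finset.sum_add_distrib, Finset.sum_sub_distrib, hps, hqs]
    ring
  rw [this]
  exact Finset.sum_le_sum fun i _ => pt_pinsker (p i) (q i) (hp i) (hq i)

lemma KL_nonneg {k : ℕ} (p q : Fin k → ℝ) (hp : ∀ i, 0 < p i) (hq : ∀ i, 0 < q i)
    (hps : ∑ i, p i = 1) (hqs : ∑ i, q i = 1) : 0 ≤ KLdiv p q := by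
  refine le_trans ?_ (KL_lb p q hp hq hps hqs)
  apply Finset.sum_nonneg
  intro i _
  have := hp i; have := hq i
  positivity

lemma pinsker {k : ℕ} (p q : Fin k → ℝ) (hp : ∀ i, 0 < p i) (hq : ∀ i, 0 < q i)
    (hps : ∑ i, p i = 1) (hqs : ∑ i, q i = 1) :
    ∑ i, |p i - q i| ≤ Real.sqrt (2 * KLdiv p q) := by
  have hw : ∀ i : Fin k, (0:ℝ) < (2*p i + 4*q i)/3 := fun i => by
    have := hp i; have := hq i; positivity
  have hsw : ∑ i : Fin k, (2*p i + 4*q i)/3 = 2 := by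
    rw [← Finset.sum_div, Finset.sum_add_distrib, ← Finset.mul_sum, ← Finset.mul_sum, hps, hqs]
    norm_num
  have cs := Finset.sq_sum_div_le_sum_sq_div Finset.univ (fun i => |p i - q i|)
      (fun i _ => hw i)
  rw [hsw] at cs
  have h2 : ∀ i : Fin k, |p i - q i|^2 / ((2*p i + 4*q i)/3) = 3*(p i - q i)^2/(2*p i + 4*q i) := by
    intro i
    rw [sq_abs]
    have := hp i; have := hq i
    field_simp
  simp_rw [h2] at cs
  have hKL := KL_lb p q hp hq hps hqs
  have hsq : (∑ i, |p i - q i|)^2 ≤ 2 * KLdiv p q := by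
    have h3 : (∑ i, |p i - q i|)^2 / 2 ≤ KLdiv p q := le_trans cs hKL
    linarith
  have hnn : 0 ≤ ∑ i, |p i - q i| := Finset.sum_nonneg fun i _ => abs_nonneg _
  calc ∑ i, |p i - q i| = Real.sqrt ((∑ i, |p i - q i|)^2) := (Real.sqrt_sq hnn).symm
    _ ≤ Real.sqrt (2 * KLdiv p q) := Real.sqrt_le_sqrt hsq

lemma grad_ineq (s u c : ℝ) (hs : 0 < s) (hu : 0 < u) (hc : 0 < c) :
    s * Real.log (s/c) + (Real.log (s/c) + 1) * (u - s) ≤ u * Real.log (u/c) := by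
  have h1 : Real.log (s/u) ≤ s/u - 1 := Real.log_le_sub_one_of_pos (by positivity)
  have h2 : Real.log (u/c) = Real.log (u/s) + Real.log (s/c) := by
    rw [← Real.log_mul (by positivity) (by positivity)]
    congr 1
    field_simp
  have h3 : Real.log (u/s) = - Real.log (s/u) := by
    rw [← Real.log_inv]
    congr 1
    rw [inv_div]
  have h4 : u * Real.log (s/u) ≤ s - u := by
    have := mul_le_mul_of_nonneg_left h1 hu.le
    calc u * Real.log (s/u) ≤ u * (s/u - 1) := this
      _ = s - u := by field_simp
  rw [h2, h3]
  nlinarith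

lemma dirOpt {k : ℕ} (ν α : ℝ) (hν : 0 < ν) (hα : 0 < α)
    (x' u g : Fin k → ℝ) (hx' : ∀ i, ν ≤ x' i) (hu : ∀ i, ν ≤ u i) (hus : ∑ i, u i = 1)
    (hmin : ∀ x : Fin k → ℝ, ((∀ i, ν ≤ x i) ∧ ∑ i, x i = 1) →
      g ⬝ᵥ u + α * KLdiv u x' ≤ g ⬝ᵥ x + α * KLdiv x x')
    (j l : Fin k) (hjl : j ≠ l) (hj : ν < u j) :
    g j + α * Real.log (u j / x' j) ≤ g l + α * Real.log (u l / x' l) := by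
  have hx'j : 0 < x' j := lt_of_lt_of_le hν (hx' j)
  have hx'l : 0 < x' l := lt_of_lt_of_le hν (hx' l)
  have huj : 0 < u j := lt_of_lt_of_le hν (hu j)
  have hul : 0 < u l := lt_of_lt_of_le hν (hu l)
  have split : ∀ F : Fin k → ℝ, ∑ i, F i = F j + F l + ∑ i ∈ (Finset.univ.erase j).erase l, F i := by
    intro F
    have hl : l ∈ Finset.univ.erase j := Finset.mem_erase.2 ⟨Ne.symm hjl, Finset.mem_univ l⟩
    rw [← Finset.sum_erase_add Finset.univ _ (Finset.mem_univ j),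
      ← Finset.sum_erase_add (Finset.univ.erase j) _ hl]
    ring
  apply le_of_forall_pos_le_add
  intro ε hε
  obtain ⟨t, ht0, ht1, hεb⟩ : ∃ t : ℝ, 0 < t ∧ t ≤ (u j - ν)/2 ∧ α * (2*(t/ν)) ≤ ε := by
    refine ⟨min ((u j - ν)/2) (ε*ν/(2*α)), lt_min (by linarith) (by positivity),
      min_le_left _ _, ?_⟩
    have h := min_le_right ((u j - ν)/2) (ε*ν/(2*α))
    calc α*(2*(min ((u j - ν)/2) (ε*ν/(2*α))/ν)) ≤ α*(2*((ε*ν/(2*α))/ν)) := by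
          gcongr
      _ = ε := by field_simp
  have hujt : ν ≤ u j - t := by linarith
  have hujt0 : 0 < u j - t := by linarith
  obtain ⟨x, hxj, hxl, hxo, hfeas⟩ : ∃ x : Fin k → ℝ, x j = u j - t ∧ x l = u l + t ∧
      (∀ i, i ≠ j → i ≠ l → x i = u i) ∧ ((∀ i, ν ≤ x i) ∧ ∑ i, x i = 1) := by
    refine ⟨fun i => u i + ((if i = j then -t else 0) + (if i = l then t else 0)),
      by simp [hjl, sub_eq_add_neg], by simp [Ne.symm hjl], ?_, ?_, ?_⟩
    · intro i h1 h2; simp [h1, h2]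
    · intro i
      by_cases h1 : i = j
      · subst h1; simp [hjl, sub_eq_add_neg]; linarith
      · by_cases h2 : i = l
        · subst h2; simp [Ne.symm hjl]; linarith [hu i]
        · simp [h1, h2]; exact hu i
    · rw [Finset.sum_add_distrib, Finset.sum_add_distrib, hus]
      simp [Finset.sum_ite_eq']
  have h0 := hmin x hfeas
  have hrest : ∑ i ∈ (Finset.univ.erase j).erase l, g i * x i
      = ∑ i ∈ (Finset.univ.erase j).erase l, g i * u i := by
    apply Finset.sum_congr rfl
    intro i hi
    have h2 := (Finset.mem_erase.1 hi).1
    have h1 := (Finset.mem_erase.1 (Finset.mem_erase.1 hi).2).1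
    rw [hxo i h1 h2]
  have hdot : g ⬝ᵥ x = g ⬝ᵥ u + t*(g l - g j) := by
    simp only [dotProduct]
    rw [split (fun i => g i * x i), split (fun i => g i * u i), hrest, hxj, hxl]
    ring
  have hsame : ∑ i ∈ (Finset.univ.erase j).erase l, x i * Real.log (x i / x' i)
      = ∑ i ∈ (Finset.univ.erase j).erase l, u i * Real.log (u i / x' i) := by
    apply Finset.sum_congr rfl
    intro i hi
    have h2 := (Finset.mem_erase.1 hi).1
    have h1 := (Finset.mem_erase.1 (Finset.mem_erase.1 hi).2).1
    rw [hxo i h1 h2]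
  have hKLx : KLdiv x x' - KLdiv u x' =
      (u j - t) * Real.log ((u j - t) / x' j) - u j * Real.log (u j / x' j)
      + ((u l + t) * Real.log ((u l + t) / x' l) - u l * Real.log (u l / x' l)) := by
    unfold KLdiv
    rw [split (fun i => x i * Real.log (x i / x' i)),
      split (fun i => u i * Real.log (u i / x' i)), hsame, hxj, hxl]
    ring
  have G1 : (u j - t) * Real.log ((u j - t)/x' j) - u j * Real.log (u j / x' j)
      ≤ -t * (Real.log ((u j - t)/x' j) + 1) := by
    have h := grad_ineq (u j - t) (u j) (x' j) hujt0 huj hx'j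
    nlinarith [h]
  have G2 : (u l + t) * Real.log ((u l + t)/x' l) - u l * Real.log (u l / x' l)
      ≤ t * (Real.log ((u l + t)/x' l) + 1) := by
    have h := grad_ineq (u l + t) (u l) (x' l) (by linarith) hul hx'l
    nlinarith [h]
  have hmain : 0 ≤ t*(g l - g j)
      + α * (t * (Real.log ((u l + t)/x' l) - Real.log ((u j - t)/x' j))) := by
    have hKLle : KLdiv x x' - KLdiv u x' ≤
        t * (Real.log ((u l + t)/x' l) - Real.log ((u j - t)/x' j)) := by
      rw [hKLx]; nlinarith [G1, G2]
    have h5 : α * (KLdiv x x' - KLdiv u x') ≤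
        α * (t * (Real.log ((u l + t)/x' l) - Real.log ((u j - t)/x' j))) :=
      mul_le_mul_of_nonneg_left hKLle hα.le
    have h6 : 0 ≤ g ⬝ᵥ x - g ⬝ᵥ u + α * (KLdiv x x' - KLdiv u x') := by linarith [h0]
    rw [hdot] at h6
    linarith
  have hlog1 : Real.log ((u l + t)/x' l) = Real.log (u l / x' l) + Real.log ((u l + t)/u l) := by
    rw [← Real.log_mul (by positivity) (by positivity)]
    congr 1
    field_simp
  have hlog2 : Real.log ((u j - t)/x' j) = Real.log (u j / x' j) - Real.log (u j/(u j - t)) := by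
    rw [← Real.log_div (by positivity) (by positivity)]
    congr 1
    field_simp
  have hR1 : Real.log ((u l + t)/u l) ≤ t/ν := by
    have h7 : Real.log ((u l + t)/u l) ≤ (u l + t)/u l - 1 :=
      Real.log_le_sub_one_of_pos (by positivity)
    have h8 : (u l + t)/u l - 1 = t / u l := by field_simp; ring
    have h9 : t / u l ≤ t / ν := div_le_div_of_nonneg_left ht0.le hν (hu l)
    linarith
  have hR2 : Real.log (u j/(u j - t)) ≤ t/ν := by
    have h7 : Real.log (u j/(u j - t)) ≤ u j/(u j - t) - 1 :=
      Real.log_le_sub_one_of_pos (by positivity)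
    have h8 : u j/(u j - t) - 1 = t / (u j - t) := by field_simp; ring
    have h9 : t / (u j - t) ≤ t / ν := div_le_div_of_nonneg_left ht0.le hν hujt
    linarith
  have hDpos : 0 ≤ (g l - g j + α * (Real.log (u l / x' l) - Real.log (u j / x' j)))
      + α * (Real.log ((u l + t)/u l) + Real.log (u j/(u j - t))) := by
    by_contra hcon
    push_neg at hcon
    rw [hlog1, hlog2] at hmain
    nlinarith [hmain, ht0, hcon]
  have hfin : α * (Real.log ((u l + t)/u l) + Real.log (u j/(u j - t))) ≤ ε := by
    have h10 : Real.log ((u l + t)/u l) + Real.log (u j/(u j - t)) ≤ 2*(t/ν) := by linarith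
    calc α * (Real.log ((u l + t)/u l) + Real.log (u j/(u j - t))) ≤ α * (2*(t/ν)) :=
          mul_le_mul_of_nonneg_left h10 hα.le
      _ ≤ ε := hεb
  linarith

lemma ratio {k : ℕ} (ν α E : ℝ) (hν : 0 < ν) (hα : 0 < α) (hE : 0 ≤ E)
    (x' u v g h : Fin k → ℝ) (hx' : ∀ i, ν ≤ x' i)
    (hu : ∀ i, ν ≤ u i) (hus : ∑ i, u i = 1)
    (hv : ∀ i, ν ≤ v i) (hvs : ∑ i, v i = 1)
    (hminu : ∀ x : Fin k → ℝ, ((∀ i, ν ≤ x i) ∧ ∑ i, x i = 1) →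
      g ⬝ᵥ u + α * KLdiv u x' ≤ g ⬝ᵥ x + α * KLdiv x x')
    (hminv : ∀ x : Fin k → ℝ, ((∀ i, ν ≤ x i) ∧ ∑ i, x i = 1) →
      h ⬝ᵥ v + α * KLdiv v x' ≤ h ⬝ᵥ x + α * KLdiv x x')
    (hgh : ∀ i, |g i - h i| ≤ E) :
    ∀ j, u j ≤ Real.exp (2*E/α) * v j := by
  intro j
  have huj : 0 < u j := lt_of_lt_of_le hν (hu j)
  have hvj : 0 < v j := lt_of_lt_of_le hν (hv j)
  have hexp1 : (1:ℝ) ≤ Real.exp (2*E/α) := by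
    rw [Real.one_le_exp_iff]
    positivity
  rcases le_or_gt (u j) (v j) with hle | hgt
  · calc u j ≤ v j := hle
      _ ≤ Real.exp (2*E/α) * v j := by nlinarith
  · -- find l with u l < v l
    obtain ⟨l, hl⟩ : ∃ l, u l < v l := by
      by_contra hcon
      push_neg at hcon
      have : ∑ i, v i < ∑ i, u i :=
        Finset.sum_lt_sum (fun i _ => hcon i) ⟨j, Finset.mem_univ j, hgt⟩
      rw [hus, hvs] at this
      exact lt_irrefl 1 this
    have hjl : j ≠ l := by
      intro hcontr
      rw [hcontr] at hgt
      linarith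
    have hujν : ν < u j := lt_of_le_of_lt (hv j) hgt
    have hvlν : ν < v l := lt_of_le_of_lt (hu l) hl
    have S1 := dirOpt ν α hν hα x' u g hx' hu hus hminu j l hjl hujν
    have S2 := dirOpt ν α hν hα x' v h hx' hv hvs hminv l j (Ne.symm hjl) hvlν
    have hx'j : 0 < x' j := lt_of_lt_of_le hν (hx' j)
    have hx'l : 0 < x' l := lt_of_lt_of_le hν (hx' l)
    have hul : 0 < u l := lt_of_lt_of_le hν (hu l)
    have hmono : Real.log (u l / x' l) ≤ Real.log (v l / x' l) := by
      apply Real.log_le_log (by positivity)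
      gcongr
    have hb1 : g l - h l ≤ E := by have := hgh l; rw [abs_le] at this; linarith [this.2]
    have hb2 : h j - g j ≤ E := by have := hgh j; rw [abs_le] at this; linarith [this.1]
    have hmono' : α * Real.log (u l / x' l) ≤ α * Real.log (v l / x' l) :=
      mul_le_mul_of_nonneg_left hmono hα.le
    have hkey : α * (Real.log (u j / x' j) - Real.log (v j / x' j)) ≤ 2*E := by linarith
    have hlogs : Real.log (u j / x' j) - Real.log (v j / x' j)
        = Real.log (u j) - Real.log (v j) := by
      rw [Real.log_div huj.ne' hx'j.ne', Real.log_div hvj.ne' hx'j.ne']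
      ring
    have hfinal : Real.log (u j) ≤ 2*E/α + Real.log (v j) := by
      rw [hlogs] at hkey
      have h2 : Real.log (u j) - Real.log (v j) ≤ 2*E/α := by
        rw [le_div_iff₀ hα]
        linarith
      linarith
    calc u j = Real.exp (Real.log (u j)) := (Real.exp_log huj).symm
      _ ≤ Real.exp (2*E/α + Real.log (v j)) := Real.exp_le_exp.2 hfinal
      _ = Real.exp (2*E/α) * v j := by rw [Real.exp_add, Real.exp_log hvj]

/-- Stability of the regularized saddle point with respect to the α-best
response, in the ℓ₁-ℓ₁ setup: if the exact saddle point `(x*, y*)` of the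
KL-regularized problem centered at `(x', y')` satisfies
`KL(x*‖x') + KL(y*‖y') ≤ cα²`, then `(x*, y*)` is entrywise `exp(2√(2c))`-multiplicatively
close to the α-best response `(x̃, ỹ)`. -/
theorem stmt11 {m n : ℕ} (hm : 1 ≤ m) (hn : 1 ≤ n)
    (A : Matrix (Fin m) (Fin n) ℝ) (hA : ∀ i j, |A i j| ≤ 1)
    (ν : ℝ) (hν : 0 < ν) (hν' : ν < 1 / max (m : ℝ) (n : ℝ))
    (α c : ℝ) (hα : 0 < α) (hc : 0 < c)
    (x' : Fin n → ℝ) (y' : Fin m → ℝ)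
    (hx' : (∀ j, ν ≤ x' j) ∧ ∑ j, x' j = 1)
    (hy' : (∀ i, ν ≤ y' i) ∧ ∑ i, y' i = 1)
    (xs : Fin n → ℝ) (ys : Fin m → ℝ)
    (hxs : (∀ j, ν ≤ xs j) ∧ ∑ j, xs j = 1)
    (hys : (∀ i, ν ≤ ys i) ∧ ∑ i, ys i = 1)
    (hxsmin : ∀ x : Fin n → ℝ, ((∀ j, ν ≤ x j) ∧ ∑ j, x j = 1) →
      ys ⬝ᵥ A.mulVec xs + α * KLdiv xs x' ≤ ys ⬝ᵥ A.mulVec x + α * KLdiv x x')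
    (hysmax : ∀ y : Fin m → ℝ, ((∀ i, ν ≤ y i) ∧ ∑ i, y i = 1) →
      y ⬝ᵥ A.mulVec xs - α * KLdiv y y' ≤ ys ⬝ᵥ A.mulVec xs - α * KLdiv ys y')
    (hmove : KLdiv xs x' + KLdiv ys y' ≤ c * α ^ 2)
    (xt : Fin n → ℝ) (yt : Fin m → ℝ)
    (hxt : (∀ j, ν ≤ xt j) ∧ ∑ j, xt j = 1)
    (hyt : (∀ i, ν ≤ yt i) ∧ ∑ i, yt i = 1)
    (hxtmin : ∀ x : Fin n → ℝ, ((∀ j, ν ≤ x j) ∧ ∑ j, x j = 1) →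
      y' ⬝ᵥ A.mulVec xt + α * KLdiv xt x' ≤ y' ⬝ᵥ A.mulVec x + α * KLdiv x x')
    (hytmax : ∀ y : Fin m → ℝ, ((∀ i, ν ≤ y i) ∧ ∑ i, y i = 1) →
      y ⬝ᵥ A.mulVec x' - α * KLdiv y y' ≤ yt ⬝ᵥ A.mulVec x' - α * KLdiv yt y') :
    (∀ j, Real.exp (-(2 * Real.sqrt (2 * c))) * xt j ≤ xs j
        ∧ xs j ≤ Real.exp (2 * Real.sqrt (2 * c)) * xt j)
    ∧ (∀ i, Real.exp (-(2 * Real.sqrt (2 * c))) * yt i ≤ ys i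
        ∧ ys i ≤ Real.exp (2 * Real.sqrt (2 * c)) * yt i) := by
  obtain ⟨hx'b, hx's⟩ := hx'
  obtain ⟨hy'b, hy's⟩ := hy'
  obtain ⟨hxsb, hxss⟩ := hxs
  obtain ⟨hysb, hyss⟩ := hys
  obtain ⟨hxtb, hxts⟩ := hxt
  obtain ⟨hytb, hyts⟩ := hyt
  have hx'p : ∀ j, 0 < x' j := fun j => lt_of_lt_of_le hν (hx'b j)
  have hy'p : ∀ i, 0 < y' i := fun i => lt_of_lt_of_le hν (hy'b i)
  have hxsp : ∀ j, 0 < xs j := fun j => lt_of_lt_of_le hν (hxsb j)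
  have hysp : ∀ i, 0 < ys i := fun i => lt_of_lt_of_le hν (hysb i)
  set E := Real.sqrt (2*c) * α with hE_def
  have hEnn : 0 ≤ E := by positivity
  have hsqrt : Real.sqrt (2*(c*α^2)) = E := by
    rw [hE_def]
    rw [show 2*(c*α^2) = (2*c)*α^2 by ring, Real.sqrt_mul (by positivity), Real.sqrt_sq hα.le]
  have hKLxs : KLdiv xs x' ≤ c*α^2 := by
    have := KL_nonneg ys y' hysp hy'p hyss hy's
    linarith
  have hKLys : KLdiv ys y' ≤ c*α^2 := by
    have := KL_nonneg xs x' hxsp hx'p hxss hx's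
    linarith
  have hpy : ∑ i, |ys i - y' i| ≤ E := by
    have h1 := pinsker ys y' hysp hy'p hyss hy's
    have h2 : Real.sqrt (2 * KLdiv ys y') ≤ Real.sqrt (2*(c*α^2)) :=
      Real.sqrt_le_sqrt (by linarith)
    rw [hsqrt] at h2
    linarith
  have hpx : ∑ j, |xs j - x' j| ≤ E := by
    have h1 := pinsker xs x' hxsp hx'p hxss hx's
    have h2 : Real.sqrt (2 * KLdiv xs x') ≤ Real.sqrt (2*(c*α^2)) :=
      Real.sqrt_le_sqrt (by linarith)
    rw [hsqrt] at h2
    linarith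
  have h2E : 2*E/α = 2 * Real.sqrt (2*c) := by
    rw [hE_def]
    field_simp
  -- x side
  have hminxs : ∀ x : Fin n → ℝ, ((∀ j, ν ≤ x j) ∧ ∑ j, x j = 1) →
      (A.vecMul ys) ⬝ᵥ xs + α * KLdiv xs x' ≤ (A.vecMul ys) ⬝ᵥ x + α * KLdiv x x' := by
    intro x hx
    have := hxsmin x hx
    rwa [Matrix.dotProduct_mulVec, Matrix.dotProduct_mulVec] at this
  have hminxt : ∀ x : Fin n → ℝ, ((∀ j, ν ≤ x j) ∧ ∑ j, x j = 1) →
      (A.vecMul y') ⬝ᵥ xt + α * KLdiv xt x' ≤ (A.vecMul y') ⬝ᵥ x + α * KLdiv x x' := by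
    intro x hx
    have := hxtmin x hx
    rwa [Matrix.dotProduct_mulVec, Matrix.dotProduct_mulVec] at this
  have hghx : ∀ j, |(A.vecMul ys) j - (A.vecMul y') j| ≤ E := by
    intro j
    have h1 : (A.vecMul ys) j - (A.vecMul y') j = ∑ i, (ys i - y' i) * A i j := by
      simp [Matrix.vecMul, dotProduct, Finset.sum_sub_distrib, sub_mul]
    rw [h1]
    calc |∑ i, (ys i - y' i) * A i j| ≤ ∑ i, |(ys i - y' i) * A i j| :=
          Finset.abs_sum_le_sum_abs _ _
      _ ≤ ∑ i, |ys i - y' i| := by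
          apply Finset.sum_le_sum
          intro i _
          rw [abs_mul]
          exact mul_le_of_le_one_right (abs_nonneg _) (hA i j)
      _ ≤ E := hpy
  have hx1 : ∀ j, xs j ≤ Real.exp (2*E/α) * xt j :=
    ratio ν α E hν hα hEnn x' xs xt (A.vecMul ys) (A.vecMul y') hx'b hxsb hxss hxtb hxts
      hminxs hminxt hghx
  have hx2 : ∀ j, xt j ≤ Real.exp (2*E/α) * xs j :=
    ratio ν α E hν hα hEnn x' xt xs (A.vecMul y') (A.vecMul ys) hx'b hxtb hxts hxsb hxss
      hminxt hminxs (fun j => by rw [abs_sub_comm]; exact hghx j)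
  -- y side
  have hdneg : ∀ (w : Fin m → ℝ) (z : Fin n → ℝ),
      (fun i => -(A.mulVec z i)) ⬝ᵥ w = -(w ⬝ᵥ A.mulVec z) := by
    intro w z
    simp [dotProduct, mul_comm]
  have hminys : ∀ y : Fin m → ℝ, ((∀ i, ν ≤ y i) ∧ ∑ i, y i = 1) →
      (fun i => -(A.mulVec xs i)) ⬝ᵥ ys + α * KLdiv ys y'
        ≤ (fun i => -(A.mulVec xs i)) ⬝ᵥ y + α * KLdiv y y' := by
    intro y hy
    have := hysmax y hy
    rw [hdneg, hdneg]
    linarith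
  have hminyt : ∀ y : Fin m → ℝ, ((∀ i, ν ≤ y i) ∧ ∑ i, y i = 1) →
      (fun i => -(A.mulVec x' i)) ⬝ᵥ yt + α * KLdiv yt y'
        ≤ (fun i => -(A.mulVec x' i)) ⬝ᵥ y + α * KLdiv y y' := by
    intro y hy
    have := hytmax y hy
    rw [hdneg, hdneg]
    linarith
  have hghy : ∀ i, |(fun i => -(A.mulVec xs i)) i - (fun i => -(A.mulVec x' i)) i| ≤ E := by
    intro i
    have h1 : -(A.mulVec xs i) - (-(A.mulVec x' i)) = ∑ j, A i j * (x' j - xs j) := by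
      simp [Matrix.mulVec, dotProduct, mul_sub, Finset.sum_sub_distrib]
      ring
    simp only []
    rw [h1]
    calc |∑ j, A i j * (x' j - xs j)| ≤ ∑ j, |A i j * (x' j - xs j)| :=
          Finset.abs_sum_le_sum_abs _ _
      _ ≤ ∑ j, |xs j - x' j| := by
          apply Finset.sum_le_sum
          intro j _
          rw [abs_mul, abs_sub_comm]
          exact mul_le_of_le_one_left (abs_nonneg _) (hA i j)
      _ ≤ E := hpx
  have hy1 : ∀ i, ys i ≤ Real.exp (2*E/α) * yt i :=
    ratio ν α E hν hα hEnn y' ys yt (fun i => -(A.mulVec xs i)) (fun i => -(A.mulVec x' i))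
      hy'b hysb hyss hytb hyts hminys hminyt hghy
  have hy2 : ∀ i, yt i ≤ Real.exp (2*E/α) * ys i :=
    ratio ν α E hν hα hEnn y' yt ys (fun i => -(A.mulVec x' i)) (fun i => -(A.mulVec xs i))
      hy'b hytb hyts hysb hyss hminyt hminys (fun i => by rw [abs_sub_comm]; exact hghy i)
  rw [h2E] at hx1 hx2 hy1 hy2
  set M := 2 * Real.sqrt (2*c) with hM
  have lower : ∀ (a b : ℝ), a ≤ Real.exp M * b → Real.exp (-M) * a ≤ b := by
    intro a b hab
    calc Real.exp (-M) * a ≤ Real.exp (-M) * (Real.exp M * b) := by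
          apply mul_le_mul_of_nonneg_left hab (Real.exp_pos _).le
      _ = b := by rw [← mul_assoc, ← Real.exp_add]; simp
  exact ⟨fun j => ⟨lower (xt j) (xs j) (hx2 j), hx1 j⟩,
    fun i => ⟨lower (yt i) (ys i) (hy2 i), hy1 i⟩⟩
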